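/- Let K be a linearly ordered idempotent semifield and A : Matrix (Fin n) (Fin p) K with n < p. Then A is singular. (Every regular family of vectors of the free module Kⁿ has at most n elements.) -/

import Mathlib

section TropHelpers
variable {K : Type*} [Semifield K] [LinearOrder K]

theorem trop_zero_le (hadd : ∀ a b : K, a + b = max a b) (a : K) : (0:K) ≤ a :=
  max_eq_right_iff.mp ((hadd 0 a).symm.trans (zero_add a))

theorem trop_le_add (hadd : ∀ a b : K, a + b = max a b) (a b : K) : a ≤ a + b := by
  rw [hadd]; exact le_max_left a b

theorem trop_sum_le (hadd : ∀ a b : K, a + b = max a b) {ι : Type*} {s : Finset ι}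
    {f : ι → K} {c : K} (h : ∀ a ∈ s, f a ≤ c) : s.sum f ≤ c := by
  classical
  induction s using Finset.induction_on with
  | empty => simpa using trop_zero_le hadd c
  | insert _ _ hx ih =>
    rename_i a s
    rw [Finset.sum_insert hx, hadd]
    exact max_le (h a (Finset.mem_insert_self a s))
      (ih fun b hb => h b (Finset.mem_insert_of_mem hb))

theorem trop_le_sum (hadd : ∀ a b : K, a + b = max a b) {ι : Type*} {s : Finset ι}
    {f : ι → K} {a : ι} (ha : a ∈ s) : f a ≤ s.sum f := by
  classical
  rw [← Finset.add_sum_erase s f ha]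
  exact trop_le_add hadd _ _

theorem trop_mul_le_mul (hadd : ∀ a b : K, a + b = max a b) {a b : K} (c : K) (h : a ≤ b) :
    c * a ≤ c * b := by
  have h1 : a + b = b := by rw [hadd]; exact max_eq_right h
  have : c * a + c * b = c * b := by rw [← mul_add, h1]
  rw [hadd] at this
  exact max_eq_right_iff.mp this

/-- The row property needed for tropical singularity. -/
def TropDep {R C : Type*} [Fintype C] (A : Matrix R C K) (x : C → K) : Prop :=
  x ≠ 0 ∧ ∀ i, ∃ c₁ c₂ : C, c₁ ≠ c₂ ∧ A i c₁ * x c₁ = A i c₂ * x c₂ ∧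
    ∀ c, A i c * x c ≤ A i c₁ * x c₁

theorem trop_nondeg (hadd : ∀ a b : K, a + b = max a b) {R C : Type*}
    [Fintype R] [Fintype C] [DecidableEq R] [DecidableEq C]
    (A : Matrix R C K) (f : R → C) (hf : Function.Injective f)
    (hfA : ∀ i, A i (f i) ≠ 0) (hcard : Fintype.card R < Fintype.card C) :
    ∃ x : C → K, TropDep A x := by
  -- a column outside the range of f
  have himg : (Finset.univ.image f).card < Fintype.card C := by
    rw [Finset.card_image_of_injective _ hf, Finset.card_univ]; exact hcard
  obtain ⟨c₀, hc₀mem⟩ : ((Finset.univ : Finset C) \ Finset.univ.image f).Nonempty := by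
    rw [← Finset.card_pos, Finset.card_sdiff_of_subset (Finset.subset_univ _), Finset.card_univ]
    omega
  have hc₀ : ∀ k, f k ≠ c₀ := by
    intro k hk
    exact (Finset.mem_sdiff.mp hc₀mem).2 (hk ▸ Finset.mem_image_of_mem f (Finset.mem_univ k))
  set e : Option R → C := fun j => j.elim c₀ f with he_def
  have he : Function.Injective e := by
    intro a b hab
    match a, b with
    | none, none => rfl
    | some a, some b => exact congrArg some (hf hab)
    | none, some b => exact absurd hab.symm (hc₀ b)
    | some a, none => exact absurd hab (hc₀ a)
  set P : Equiv.Perm (Option R) → K := fun τ => ∏ k, A k (e (τ (some k))) with hP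
  set x' : Option R → K := fun j => ∑ τ : Equiv.Perm (Option R),
      if τ none = j then P τ else 0 with hx'
  set x : C → K := fun c => ∑ j : Option R, if e j = c then x' j else 0 with hx
  have hxe : ∀ j, x (e j) = x' j := by
    intro j
    rw [hx]
    refine Finset.sum_eq_single j (fun b _ hb => if_neg (fun h => hb (he h))) ?_ |>.trans
      (if_pos rfl)
    exact fun h => absurd (Finset.mem_univ j) h
  have hxnr : ∀ c, (∀ j, e j ≠ c) → x c = 0 := by
    intro c hc
    rw [hx]
    exact Finset.sum_eq_zero fun j _ => if_neg (hc j)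
  have hPle : ∀ τ, P τ ≤ x' (τ none) := by
    intro τ
    have := trop_le_sum hadd (f := fun τ' : Equiv.Perm (Option R) =>
      if τ' none = τ none then P τ' else 0) (Finset.mem_univ τ)
    simpa using this
  refine ⟨x, ?_, ?_⟩
  · -- x ≠ 0
    intro h0
    have h1 : P 1 ≠ 0 := by
      rw [hP]
      refine Finset.prod_ne_zero_iff.mpr fun k _ => ?_
      simpa [he_def] using hfA k
    have hx0 : x' none = 0 := by rw [← hxe none, h0]; simp
    have hle : P 1 ≤ (0:K) := by
      have h2 := hPle 1
      rw [Equiv.Perm.one_apply, hx0] at h2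
      exact h2
    exact h1 (le_antisymm hle (trop_zero_le hadd _))
  · intro i
    set w : Equiv.Perm (Option R) → K := fun τ => A i (e (τ none)) * P τ with hw
    obtain ⟨τs, _, hmax⟩ := Finset.exists_max_image Finset.univ w ⟨1, Finset.mem_univ 1⟩
    have claim1 : ∀ τ, w τ ≤ A i (e (τ none)) * x' (τ none) :=
      fun τ => trop_mul_le_mul hadd _ (hPle τ)
    have claim2 : ∀ j, A i (e j) * x' j ≤ w τs := by
      intro j
      have hrw : A i (e j) * x' j
          = ∑ τ : Equiv.Perm (Option R), if τ none = j then w τ else 0 := by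
        rw [hx', Finset.mul_sum]
        refine Finset.sum_congr rfl fun τ _ => ?_
        split_ifs with h
        · rw [hw, ← h]
        · exact mul_zero _
      rw [hrw]
      refine trop_sum_le hadd fun τ _ => ?_
      split_ifs with h
      · exact hmax τ (Finset.mem_univ τ)
      · exact trop_zero_le hadd _
    set τ' : Equiv.Perm (Option R) := τs * Equiv.swap none (some i) with hτ'
    have hτ'none : τ' none = τs (some i) := by
      rw [hτ', Equiv.Perm.mul_apply, Equiv.swap_apply_left]
    have hwτ' : w τ' = w τs := by
      show A i (e (τ' none)) * P τ' = A i (e (τs none)) * P τs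
      have hprod : ∀ τ : Equiv.Perm (Option R),
          P τ = A i (e (τ (some i))) * ∏ k ∈ Finset.univ.erase i, A k (e (τ (some k))) :=
        fun τ => (Finset.mul_prod_erase Finset.univ _ (Finset.mem_univ i)).symm
      have herase : ∀ k ∈ Finset.univ.erase i,
          A k (e (τ' (some k))) = A k (e (τs (some k))) := by
        intro k hk
        have hki : k ≠ i := (Finset.mem_erase.mp hk).1
        rw [hτ', Equiv.Perm.mul_apply,
          Equiv.swap_apply_of_ne_of_ne (by simp) (by simpa using hki)]
      rw [hprod, hprod, Finset.prod_congr rfl herase, hτ'none,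
        hτ', Equiv.Perm.mul_apply, Equiv.swap_apply_right]
      ring
    have hj1 : A i (e (τs none)) * x' (τs none) = w τs :=
      le_antisymm (claim2 _) (claim1 τs)
    have hj2 : A i (e (τs (some i))) * x' (τs (some i)) = w τs := by
      refine le_antisymm (claim2 _) ?_
      have := claim1 τ'
      rwa [hwτ', hτ'none] at this
    have hjne : τs none ≠ τs (some i) := fun h => Option.some_ne_none i (τs.injective h).symm
    refine ⟨e (τs none), e (τs (some i)), fun h => hjne (he h), ?_, ?_⟩
    · rw [hxe, hxe, hj1, hj2]
    · intro c
      rw [hxe, hj1]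
      by_cases hc : ∃ j, e j = c
      · obtain ⟨j, rfl⟩ := hc
        rw [hxe]
        exact claim2 j
      · push_neg at hc
        rw [hxnr c hc, mul_zero]
        exact trop_zero_le hadd _

theorem trop_key (hadd : ∀ a b : K, a + b = max a b) (N : ℕ) :
    ∀ (R C : Type) [Fintype R] [Fintype C] [DecidableEq R] [DecidableEq C]
      (A : Matrix R C K), Fintype.card R ≤ N → Fintype.card R < Fintype.card C →
      ∃ x : C → K, TropDep A x := by
  induction N with
  | zero =>
    intro R C _ _ _ _ A hN hcard
    by_cases hHall : ∀ s : Finset R,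
        s.card ≤ (s.biUnion (fun i => Finset.univ.filter (fun c => A i c ≠ 0))).card
    · obtain ⟨f, hf, hfN⟩ := (Finset.all_card_le_biUnion_card_iff_exists_injective _).mp hHall
      exact trop_nondeg hadd A f hf (fun i => (Finset.mem_filter.mp (hfN i)).2) hcard
    · push_neg at hHall
      obtain ⟨S, hS⟩ := hHall
      have := Finset.card_le_univ S
      omega
  | succ N ih =>
    intro R C _ _ _ _ A hN hcard
    by_cases hHall : ∀ s : Finset R,
        s.card ≤ (s.biUnion (fun i => Finset.univ.filter (fun c => A i c ≠ 0))).card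
    · obtain ⟨f, hf, hfN⟩ := (Finset.all_card_le_biUnion_card_iff_exists_injective _).mp hHall
      exact trop_nondeg hadd A f hf (fun i => (Finset.mem_filter.mp (hfN i)).2) hcard
    · push_neg at hHall
      obtain ⟨S, hS⟩ := hHall
      set T : Finset C := S.biUnion (fun i => Finset.univ.filter (fun c => A i c ≠ 0)) with hT
      have hScard : S.card ≤ Fintype.card R := Finset.card_le_univ S
      have hTcard : T.card ≤ Fintype.card C := Finset.card_le_univ T
      have hcardR' : Fintype.card {i : R // i ∉ S} = Fintype.card R - S.card := by
        rw [Fintype.card_subtype_compl, Fintype.card_coe]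
      have hcardC' : Fintype.card {c : C // c ∉ T} = Fintype.card C - T.card := by
        rw [Fintype.card_subtype_compl, Fintype.card_coe]
      obtain ⟨x'', hx''ne, hx''row⟩ :=
        ih {i : R // i ∉ S} {c : C // c ∉ T} (fun i c => A i.1 c.1)
          (by rw [hcardR']; omega) (by rw [hcardR', hcardC']; omega)
      set x : C → K := fun c => if h : c ∈ T then 0 else x'' ⟨c, h⟩ with hxdef
      have hxT : ∀ c ∈ T, x c = 0 := fun c hc => dif_pos hc
      have hxval : ∀ (c : C) (h : c ∉ T), x c = x'' ⟨c, h⟩ := fun c h => dif_neg h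
      refine ⟨x, ?_, ?_⟩
      · intro h0
        obtain ⟨c', hc'⟩ := Function.ne_iff.mp hx''ne
        apply hc'
        have h1 := congrFun h0 c'.1
        rw [hxval c'.1 c'.2] at h1
        simpa using h1
      · intro i
        by_cases hi : i ∈ S
        · have hzero : ∀ c, A i c * x c = 0 := by
            intro c
            by_cases hc : c ∈ T
            · rw [hxT c hc, mul_zero]
            · have hA : A i c = 0 := by
                by_contra hA
                exact hc (Finset.mem_biUnion.mpr
                  ⟨i, hi, Finset.mem_filter.mpr ⟨Finset.mem_univ c, hA⟩⟩)
              rw [hA, zero_mul]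
          have h2C : 1 < Fintype.card C := by omega
          obtain ⟨c₁, c₂, hne⟩ := Fintype.exists_pair_of_one_lt_card h2C
          exact ⟨c₁, c₂, hne, by rw [hzero, hzero], fun c => by rw [hzero, hzero]⟩
        · obtain ⟨c₁, c₂, hne, heq, hdom⟩ := hx''row ⟨i, hi⟩
          refine ⟨c₁.1, c₂.1, fun h => hne (Subtype.ext h), ?_, ?_⟩
          · rw [hxval c₁.1 c₁.2, hxval c₂.1 c₂.2, Subtype.eta, Subtype.eta]
            exact heq
          · intro c
            rw [hxval c₁.1 c₁.2, Subtype.eta]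
            by_cases hc : c ∈ T
            · rw [hxT c hc, mul_zero]
              exact trop_zero_le hadd _
            · rw [hxval c hc]
              exact hdom ⟨c, hc⟩

end TropHelpers

/-- A matrix is singular if it admits an orthogonal decomposition `A = A₁ + A₂`
(entrywise disjoint supports) together with a nonzero vector `x` with `A₁ x = A₂ x`. -/
def Matrix.TropSingular {K : Type*} [Semifield K] {m n : Type*} [Fintype n]
    (A : Matrix m n K) : Prop :=
  ∃ A₁ A₂ : Matrix m n K, A = A₁ + A₂ ∧ (∀ i j, A₁ i j = 0 ∨ A₂ i j = 0) ∧
    ∃ x : n → K, x ≠ 0 ∧ A₁.mulVec x = A₂.mulVec x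

theorem wide_matrix_singular {K : Type*} [Semifield K] [LinearOrder K]
    (hadd : ∀ a b : K, a + b = max a b) {n p : ℕ} (hnp : n < p)
    (A : Matrix (Fin n) (Fin p) K) :
    A.TropSingular := by
  classical
  obtain ⟨x, hxne, hrow⟩ := trop_key hadd n (Fin n) (Fin p) A (by simp) (by simpa)
  choose c₁ c₂ hne heq hdom using hrow
  refine ⟨Matrix.of fun i j => if j = c₁ i then A i j else 0,
          Matrix.of fun i j => if j = c₁ i then 0 else A i j, ?_, ?_, x, hxne, ?_⟩
  · ext i j
    by_cases h : j = c₁ i <;> simp [h]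
  · intro i j
    by_cases h : j = c₁ i
    · right; simp [h]
    · left; simp [h]
  · funext i
    show ∑ j, (if j = c₁ i then A i j else 0) * x j
        = ∑ j, (if j = c₁ i then 0 else A i j) * x j
    have hL : ∑ j, (if j = c₁ i then A i j else 0) * x j = A i (c₁ i) * x (c₁ i) := by
      have hc : ∀ j ∈ Finset.univ,
          (if j = c₁ i then A i j else 0) * x j = if j = c₁ i then A i j * x j else 0 := by
        intro j _; split_ifs <;> simp
      rw [Finset.sum_congr rfl hc,
        Finset.sum_ite_eq' Finset.univ (c₁ i) (fun j => A i j * x j)]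
      simp
    rw [hL]
    refine le_antisymm ?_ ?_
    · have h2 : (if c₂ i = c₁ i then 0 else A i (c₂ i)) * x (c₂ i)
          ≤ ∑ j, (if j = c₁ i then 0 else A i j) * x j :=
        trop_le_sum hadd (f := fun j => (if j = c₁ i then 0 else A i j) * x j)
          (Finset.mem_univ (c₂ i))
      rw [if_neg (Ne.symm (hne i))] at h2
      exact (heq i) ▸ h2
    · refine trop_sum_le hadd fun j _ => ?_
      split_ifs with h
      · rw [zero_mul]; exact trop_zero_le hadd _
      · exact hdom i j
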